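/- If there exists a rational invertible (n+2)×(n+2) matrix W with W^T Q_{D,n} W = Q_{W,n}, then n = 2k² or n = (2k-1)² for some positive integer k. -/

import Mathlib

open Matrix

/-- Descartes quadratic form matrix in dimension `n`, over `ℚ`. -/
def QDq (n : ℕ) : Matrix (Fin (n+2)) (Fin (n+2)) ℚ :=
  1 - (n : ℚ)⁻¹ • Matrix.of (fun _ _ => (1 : ℚ))

/-- Wilker quadratic form matrix in dimension `n`, over `ℚ`. -/
def QWq (n : ℕ) : Matrix (Fin (n+2)) (Fin (n+2)) ℚ :=
  Matrix.of (fun i j =>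
    if (i = 0 ∧ j = 1) ∨ (i = 1 ∧ j = 0) then (-4 : ℚ)
    else if i = j then (if 2 ≤ (i : ℕ) then 2 else 0) else 0)

lemma detQD (n : ℕ) (hn : 2 ≤ n) : (QDq n).det = -2 / (n : ℚ) := by
  have hne : (n : ℚ) ≠ 0 := Nat.cast_ne_zero.mpr (by omega)
  have h1 : QDq n = 1 + replicateCol Unit (fun _ => -(n:ℚ)⁻¹) * replicateRow Unit (fun _ => (1:ℚ)) := by
    ext i j
    simp [QDq, Matrix.replicateCol, Matrix.replicateRow, Matrix.mul_apply, sub_eq_add_neg]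
  rw [h1, det_one_add_replicateCol_mul_replicateRow]
  simp [dotProduct]
  field_simp
  ring

lemma detQW (n : ℕ) : (QWq n).det = -(2:ℚ)^(n+4) := by
  let e : Fin 2 ⊕ Fin n ≃ Fin (n+2) :=
    finSumFinEquiv.trans (finCongr (by omega))
  have hli : ∀ a : Fin 2, ((e (Sum.inl a)) : ℕ) = (a : ℕ) := by
    intro a; simp [e, finSumFinEquiv]
  have hri : ∀ b : Fin n, ((e (Sum.inr b)) : ℕ) = 2 + (b : ℕ) := by
    intro b; simp [e, finSumFinEquiv]; omega
  clear_value e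
  have key : ∀ i j, QWq n (e i) (e j) =
      fromBlocks !![(0:ℚ),-4;-4,0] 0 0 ((2:ℚ) • (1 : Matrix (Fin n) (Fin n) ℚ)) i j := by
    rintro (a | a) (b | b)
    · fin_cases a <;> fin_cases b <;>
        simp_all [QWq, fromBlocks, Fin.ext_iff, -Fin.val_eq_zero_iff] <;> omega
    · have := hli a; have := hri b
      simp only [QWq, fromBlocks, Matrix.of_apply, Sum.elim_inl, Sum.elim_inr,
        Matrix.zero_apply, Fin.ext_iff, Fin.val_zero, Fin.val_one]
      split_ifs <;> first | rfl | (exfalso; omega)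
    · have := hli b; have := hri a
      simp only [QWq, fromBlocks, Matrix.of_apply, Sum.elim_inl, Sum.elim_inr,
        Matrix.zero_apply, Fin.ext_iff, Fin.val_zero, Fin.val_one]
      split_ifs <;> first | rfl | (exfalso; omega)
    · have h1 := hri a; have h2 := hri b
      simp only [QWq, fromBlocks, Matrix.of_apply, Sum.elim_inl, Sum.elim_inr,
        Matrix.smul_apply, Matrix.one_apply, Fin.ext_iff, Fin.val_zero, Fin.val_one,
        smul_eq_mul]
      split_ifs <;> (try rfl) <;> (try norm_num) <;> omega
  have h : QWq n = (fromBlocks !![(0:ℚ),-4;-4,0] 0 0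
      ((2:ℚ) • (1 : Matrix (Fin n) (Fin n) ℚ))).submatrix e.symm e.symm := by
    ext i j
    rw [Matrix.submatrix_apply]
    have := key (e.symm i) (e.symm j)
    simpa using this
  rw [h, Matrix.det_submatrix_equiv_self, Matrix.det_fromBlocks_zero₁₂,
    Matrix.det_smul, Matrix.det_one, Matrix.det_fin_two_of]
  simp [Fintype.card_fin]
  ring

theorem superRational_dimension_necessary (n : ℕ) (hn : 2 ≤ n)
    (W : Matrix (Fin (n+2)) (Fin (n+2)) ℚ) (hWinv : IsUnit W.det)
    (hW : Wᵀ * QDq n * W = QWq n) :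
    ∃ k : ℕ, 0 < k ∧ (n = 2 * k ^ 2 ∨ n = (2 * k - 1) ^ 2) := by
  have hne : (n : ℚ) ≠ 0 := Nat.cast_ne_zero.mpr (by omega)
  have hdet := congrArg Matrix.det hW
  rw [Matrix.det_mul, Matrix.det_mul, Matrix.det_transpose, detQD n hn, detQW n] at hdet
  have hq : W.det ^ 2 = (n : ℚ) * 2 ^ (n + 3) := by
    field_simp at hdet
    linear_combination -hdet / 2
  have hsq : IsSquare (n * 2 ^ (n + 3)) := by
    rw [← Rat.isSquare_natCast_iff]
    exact ⟨W.det, by push_cast; rw [← hq]; ring⟩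
  obtain ⟨m, hm⟩ := hsq
  rcases Nat.even_or_odd n with he | ho
  · obtain ⟨l, hl⟩ := he
    have hl1 : 1 ≤ l := by omega
    have hmm : m * m = l * (2 ^ (l + 2)) ^ 2 := by
      rw [← hm, hl]; ring_nf
    have hdvd : 2 ^ (l + 2) ∣ m := by
      rw [← Nat.pow_dvd_pow_iff (two_ne_zero)]
      exact ⟨l, by rw [pow_two, hmm]; ring⟩
    obtain ⟨r, hr⟩ := hdvd
    have hrl : r * r = l := by
      have h3 : (2 ^ (l + 2)) ^ 2 * (r * r) = (2 ^ (l + 2)) ^ 2 * l := by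
        have h4 : m * m = (2 ^ (l + 2)) ^ 2 * (r * r) := by rw [hr]; ring
        rw [← h4, hmm]; ring
      exact Nat.eq_of_mul_eq_mul_left (by positivity) h3
    refine ⟨r, ?_, Or.inl ?_⟩
    · rcases Nat.eq_zero_or_pos r with h0 | h0
      · subst h0; simp at hrl; omega
      · exact h0
    · rw [hl, ← hrl]; ring
  · obtain ⟨l, hl⟩ := ho
    have hmm : m * m = n * (2 ^ (l + 2)) ^ 2 := by
      rw [← hm, hl]; ring_nf
    have hdvd : 2 ^ (l + 2) ∣ m := by
      rw [← Nat.pow_dvd_pow_iff (two_ne_zero)]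
      exact ⟨n, by rw [pow_two, hmm]; ring⟩
    obtain ⟨r, hr⟩ := hdvd
    have hrl : r * r = n := by
      have h3 : (2 ^ (l + 2)) ^ 2 * (r * r) = (2 ^ (l + 2)) ^ 2 * n := by
        have h4 : m * m = (2 ^ (l + 2)) ^ 2 * (r * r) := by rw [hr]; ring
        rw [← h4, hmm]; ring
      exact Nat.eq_of_mul_eq_mul_left (by positivity) h3
    have hrodd : Odd r := by
      rcases Nat.even_or_odd r with hre | hro
      · exfalso
        have : Even (r * r) := hre.mul_right r
        rw [hrl, hl] at this
        obtain ⟨t, ht⟩ := this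
        omega
      · exact hro
    obtain ⟨c, hc⟩ := hrodd
    have hcr : 2 * (c + 1) - 1 = r := by omega
    exact ⟨c + 1, by omega, Or.inr (by rw [hcr, ← hrl]; ring)⟩
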